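/- Parallel execution of pairwise strongly-swappable transactions equals any serialization: if every two distinct transactions in a finite multiset A are strongly swappable (their safe write-approximations are pairwise disjoint, and each one's write-approximation is disjoint from the others' read-approximations), then for any enumeration T₁,…,Tₙ of A and any state σ, applying the merged update ⊕_{T∈A} Δ(σ,T) to σ equals the sequential execution ⟦T₁⋯Tₙ⟧σ, where Δ(σ,T) is the minimal state update such that σΔ(σ,T) = ⟦T⟧σ and dom(Δ(σ,T)) ⊆ W(T). -/

import Mathlib

variable {Obs Val Tx : Type*} [DecidableEq Tx]

/-- The minimal state update Δ(σ,T): records exactly the observables whose value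
changes when executing T from σ. -/
noncomputable def delta (sem : Tx → (Obs → Val) → (Obs → Val)) (σ : Obs → Val)
    (T : Tx) : Obs → Option Val :=
  open Classical in
  fun a => if sem T σ a ≠ σ a then some (sem T σ a) else none

/-- Merge (union) of a list of state updates with pairwise disjoint domains. -/
def mergeAll (ps : List (Obs → Option Val)) : Obs → Option Val :=
  fun a => ps.foldr (fun π acc => (π a).orElse (fun _ => acc)) none

/-- Applying a state update to a (total) state. -/
def applyUpd (σ : Obs → Val) (π : Obs → Option Val) : Obs → Val :=
  fun a => (π a).getD (σ a)

/-- Sequential execution of a list of transactions. -/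
def execL (sem : Tx → (Obs → Val) → (Obs → Val)) : List Tx → (Obs → Val) → (Obs → Val)
  | [], σ => σ
  | T :: l, σ => execL sem l (sem T σ)

/-- Parallel execution of pairwise strongly-swappable transactions equals any
serialization: applying the merged minimal updates ⊕_{T∈A} Δ(σ,T) to σ equals
the sequential execution of any enumeration of A. -/
theorem parallel_eq_serial
    (sem : Tx → (Obs → Val) → (Obs → Val)) (W R : Tx → Set Obs)
    (hW : ∀ (T : Tx) (σ : Obs → Val) (a : Obs), a ∉ W T → sem T σ a = σ a)
    (hR : ∀ (T : Tx) (σ₁ σ₂ : Obs → Val) (Q : Set Obs),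
      (∀ a ∈ R T, σ₁ a = σ₂ a) → (∀ a ∈ Q, σ₁ a = σ₂ a) →
      ∀ a ∈ Q, sem T σ₁ a = sem T σ₂ a)
    (A : Multiset Tx)
    (hA : ∀ T ∈ A, ∀ T' ∈ A.erase T,
      (R T ∪ W T) ∩ W T' = ∅ ∧ (R T' ∪ W T') ∩ W T = ∅)
    (l : List Tx) (hl : (l : Multiset Tx) = A) (σ : Obs → Val) :
    applyUpd σ (mergeAll (l.map (delta sem σ))) = execL sem l σ := by
  have Hnone : ∀ (ps : List (Obs → Option Val)) (a : Obs),
      (∀ π ∈ ps, π a = none) → mergeAll ps a = none := by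
    intro ps a h
    induction ps with
    | nil => rfl
    | cons π ps ihp =>
      have h1 : π a = none := h π (List.mem_cons_self)
      have h2 : mergeAll ps a = none := ihp (fun π' hπ' => h π' (List.mem_cons_of_mem _ hπ'))
      simp [mergeAll] at h2 ⊢
      simp [h1, h2]
  have H : ∀ T ∈ l, ∀ T' ∈ (l : Multiset Tx).erase T,
      (R T ∪ W T) ∩ W T' = ∅ ∧ (R T' ∪ W T') ∩ W T = ∅ := by
    subst hl; exact hA
  clear hA hl A
  induction l generalizing σ with
  | nil => rfl
  | cons T l' ih =>
    have hhead : ∀ T' ∈ l', (R T ∪ W T) ∩ W T' = ∅ ∧ (R T' ∪ W T') ∩ W T = ∅ := by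
      intro T' hT'
      refine H T (List.mem_cons_self) T' ?_
      have : ((T :: l' : List Tx) : Multiset Tx).erase T = (l' : Multiset Tx) := by
        simp
      rw [this]
      exact hT'
    have Htail : ∀ T' ∈ l', ∀ T'' ∈ (l' : Multiset Tx).erase T',
        (R T' ∪ W T') ∩ W T'' = ∅ ∧ (R T'' ∪ W T'') ∩ W T' = ∅ := by
      intro T' h1 T'' h2
      refine H T' (List.mem_cons_of_mem _ h1) T'' ?_
      have hle : (l' : Multiset Tx).erase T' ≤ ((T :: l' : List Tx) : Multiset Tx).erase T' := by
        apply Multiset.erase_le_erase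
        simp only [← Multiset.cons_coe]
        exact Multiset.le_cons_self _ _
      exact Multiset.mem_of_le hle h2
    have ih' := ih (sem T σ) Htail
    have hdelta : ∀ T' ∈ l', delta sem (sem T σ) T' = delta sem σ T' := by
      intro T' hT'
      obtain ⟨h1, h2⟩ := hhead T' hT'
      have hWW : ∀ a, a ∈ W T → a ∉ W T' := fun a ha ha' =>
        Set.eq_empty_iff_forall_notMem.mp h1 a ⟨Or.inr ha, ha'⟩
      have hRW : ∀ a, a ∈ R T' → a ∉ W T := fun a ha ha' =>
        Set.eq_empty_iff_forall_notMem.mp h2 a ⟨Or.inl ha, ha'⟩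
      funext b
      by_cases hb : b ∈ W T
      · have e1 : sem T' (sem T σ) b = sem T σ b := hW T' (sem T σ) b (hWW b hb)
        have e2 : sem T' σ b = σ b := hW T' σ b (hWW b hb)
        simp [delta, e1, e2]
      · have hagree : ∀ a ∈ R T', sem T σ a = σ a := fun a ha => hW T σ a (hRW a ha)
        have hq : sem T' (sem T σ) b = sem T' σ b :=
          hR T' (sem T σ) σ {b} hagree
            (fun a ha => by cases ha; exact hW T σ b hb) b rfl
        have hb' : sem T σ b = σ b := hW T σ b hb
        simp only [delta]
        rw [hq, hb']
    have hmap : l'.map (delta sem (sem T σ)) = l'.map (delta sem σ) :=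
      List.map_congr_left hdelta
    show applyUpd σ (mergeAll ((T :: l').map (delta sem σ))) = execL sem l' (sem T σ)
    rw [← ih', hmap]
    funext a
    have hcons : mergeAll (delta sem σ T :: l'.map (delta sem σ)) a
        = (delta sem σ T a).orElse (fun _ => mergeAll (l'.map (delta sem σ)) a) := rfl
    by_cases ha : sem T σ a = σ a
    · have hda : delta sem σ T a = none := by simp [delta, ha]
      simp only [applyUpd, List.map_cons, hcons, hda]
      rw [ha]
      rfl
    · have haW : a ∈ W T := by
        by_contra hna
        exact ha (hW T σ a hna)
      have hda : delta sem σ T a = some (sem T σ a) := by simp [delta, ha]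
      have hrest : mergeAll (l'.map (delta sem σ)) a = none := by
        apply Hnone
        intro π hπ
        obtain ⟨T', hT', rfl⟩ := List.mem_map.mp hπ
        obtain ⟨h1, _⟩ := hhead T' hT'
        have : a ∉ W T' := fun ha' =>
          Set.eq_empty_iff_forall_notMem.mp h1 a ⟨Or.inr haW, ha'⟩
        simp [delta, hW T' σ a this]
      simp only [applyUpd, List.map_cons, hcons, hda, hrest]
      rfl
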